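/- arXiv:1503.04894 — 4 statements merged into one kernel-verified Lean document; each statement's English description precedes it below -/
import Mathlib

section
/- Let μ > 0, and let r, g : I → ℝ² be differentiable functions on an interval I with r(t) ≠ 0 for all t, satisfying ṙ(t) = g(t) and ġ(t) = u(t) g(t)^⊥, where g^⊥ is the counterclockwise rotation of g by π/2 and the control is the motion camouflage law u(t) = −μ (r(t)·g(t)^⊥)/|r(t)|. Define the scalar shape variables ρ(t) = |r(t)|, γ(t) = (r(t)·g(t))/|r(t)|, λ(t) = (r(t)·g(t)^⊥)/|r(t)|, and let δ = |g| (which is constant along the dynamics). Then ρ̇(t) = γ(t) and γ̇(t) = (1/ρ(t) − μ)(δ² − γ(t)²) for all t ∈ I. -/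
open scoped RealInnerProductSpace

/-- Counterclockwise rotation of a planar vector by `π/2`. -/
def perp (v : EuclideanSpace ℝ (Fin 2)) : EuclideanSpace ℝ (Fin 2) :=
  WithLp.toLp 2 ![-v 1, v 0]

lemma inner_expand (x y : EuclideanSpace ℝ (Fin 2)) :
    ⟪x, y⟫ = x 0 * y 0 + x 1 * y 1 := by
  simp [PiLp.inner_apply, Fin.sum_univ_two, mul_comm]

lemma perp_apply0 (v : EuclideanSpace ℝ (Fin 2)) : perp v 0 = -v 1 := rfl
lemma perp_apply1 (v : EuclideanSpace ℝ (Fin 2)) : perp v 1 = v 0 := rfl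

lemma planar_identity (x y : EuclideanSpace ℝ (Fin 2)) :
    ⟪x, y⟫ ^ 2 + ⟪x, perp y⟫ ^ 2 = ‖x‖ ^ 2 * ‖y‖ ^ 2 := by
  rw [← real_inner_self_eq_norm_sq, ← real_inner_self_eq_norm_sq]
  simp only [inner_expand, perp_apply0, perp_apply1]
  ring

/-- Reduction of the planar motion camouflage dynamics to the scalar shape variables:
for `r' = g`, `g' = u • g^⊥` with the motion camouflage feedback
`u = -μ ⟪r, g^⊥⟫ / ‖r‖`, the shape variables `ρ = ‖r‖` and `γ = ⟪r, g⟫ / ‖r‖`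
satisfy `ρ' = γ` and `γ' = (1/ρ - μ) (δ² - γ²)`, where `δ = ‖g‖` is constant. -/
theorem mmc_reduced_dynamics
    (μ : ℝ) (hμ : 0 < μ) (I : Set ℝ) (hI : I.OrdConnected)
    (r g : ℝ → EuclideanSpace ℝ (Fin 2)) (u : ℝ → ℝ) (δ : ℝ)
    (hr0 : ∀ t ∈ I, r t ≠ 0)
    (hu : ∀ t ∈ I, u t = -μ * (⟪r t, perp (g t)⟫ / ‖r t‖))
    (hr : ∀ t ∈ I, HasDerivAt r (g t) t)
    (hg : ∀ t ∈ I, HasDerivAt g (u t • perp (g t)) t)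
    (hδ : ∀ t ∈ I, ‖g t‖ = δ) :
    ∀ t ∈ I,
      HasDerivAt (fun s => ‖r s‖) (⟪r t, g t⟫ / ‖r t‖) t ∧
      HasDerivAt (fun s => ⟪r s, g s⟫ / ‖r s‖)
        ((1 / ‖r t‖ - μ) * (δ ^ 2 - (⟪r t, g t⟫ / ‖r t‖) ^ 2)) t := by
  intro t ht
  have hrne : r t ≠ 0 := hr0 t ht
  have hnrm : ‖r t‖ ≠ 0 := norm_ne_zero_iff.mpr hrne
  have hnpos : (0:ℝ) < ‖r t‖ := norm_pos_iff.mpr hrne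
  -- derivative of ⟪r, r⟫
  have hin : HasDerivAt (fun s => ⟪r s, r s⟫) (⟪r t, g t⟫ + ⟪g t, r t⟫) t :=
    (hr t ht).inner ℝ (hr t ht)
  have hinpos : (0:ℝ) < ⟪r t, r t⟫ := by
    rw [real_inner_self_eq_norm_sq]; positivity
  have hsq : HasDerivAt (fun s => Real.sqrt ⟪r s, r s⟫)
      ((⟪r t, g t⟫ + ⟪g t, r t⟫) / (2 * Real.sqrt ⟪r t, r t⟫)) t :=
    hin.sqrt (ne_of_gt hinpos)
  have hsqrt_eq : ∀ s, Real.sqrt ⟪r s, r s⟫ = ‖r s‖ := fun s => by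
    rw [real_inner_self_eq_norm_sq]; exact Real.sqrt_sq (norm_nonneg _)
  have hnormderiv : HasDerivAt (fun s => ‖r s‖) (⟪r t, g t⟫ / ‖r t‖) t := by
    have h2 := hsq
    simp only [hsqrt_eq] at h2
    convert h2 using 1
    rw [real_inner_comm (g t) (r t)]
    field_simp; ring
  refine ⟨hnormderiv, ?_⟩
  -- derivative of ⟪r, g⟫
  have hrg : HasDerivAt (fun s => ⟪r s, g s⟫)
      (⟪r t, u t • perp (g t)⟫ + ⟪g t, g t⟫) t :=
    (hr t ht).inner ℝ (hg t ht)
  have hdiv : HasDerivAt (fun s => ⟪r s, g s⟫ / ‖r s‖)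
      (((⟪r t, u t • perp (g t)⟫ + ⟪g t, g t⟫) * ‖r t‖
        - ⟪r t, g t⟫ * (⟪r t, g t⟫ / ‖r t‖)) / ‖r t‖ ^ 2) t :=
    hrg.div hnormderiv hnrm
  convert hdiv using 1
  have hid := planar_identity (r t) (g t)
  have hδt : ‖g t‖ = δ := hδ t ht
  have hgg : ⟪g t, g t⟫ = δ ^ 2 := by
    rw [real_inner_self_eq_norm_sq, hδt]
  rw [hu t ht, real_inner_smul_right, hgg]
  have hlam : ⟪r t, perp (g t)⟫ ^ 2 = ‖r t‖ ^ 2 * δ ^ 2 - ⟪r t, g t⟫ ^ 2 := by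
    rw [← hδt]; linarith [hid]
  set a := ⟪r t, g t⟫ with ha
  set b := ⟪r t, perp (g t)⟫ with hb
  set n := ‖r t‖ with hn
  field_simp
  ring_nf
  linear_combination (n * μ) * hlam
end

section
/- Let μ > 0 and δ ≥ 0, and let (ρ, γ) : I → ℝ² be a differentiable solution of the reduced mutual motion camouflage dynamics ρ̇(t) = γ(t), γ̇(t) = (1/ρ(t) − μ)(δ² − γ(t)²) with ρ(t) > 0 on the interval I. Then the quantity E(ρ(t), γ(t)) = ρ(t)² (δ² − γ(t)²) e^{−2μρ(t)} is constant along the solution; i.e., E(ρ(t), γ(t)) = E(ρ(0), γ(0)) for all t ∈ I. -/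
/-- The quantity `E(ρ, γ) = ρ² (δ² - γ²) e^{-2μρ}` is conserved along any solution of
the reduced mutual motion camouflage dynamics `ρ' = γ`, `γ' = (1/ρ - μ)(δ² - γ²)`
with `ρ > 0` on an interval `I` containing `0`. -/
theorem mmc_reduced_conserved
    (μ δ : ℝ) (hμ : 0 < μ) (hδ : 0 ≤ δ)
    (I : Set ℝ) (hI : I.OrdConnected) (h0I : (0 : ℝ) ∈ I)
    (ρ γ : ℝ → ℝ)
    (hρpos : ∀ t ∈ I, 0 < ρ t)
    (hρ : ∀ t ∈ I, HasDerivAt ρ (γ t) t)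
    (hγ : ∀ t ∈ I, HasDerivAt γ ((1 / ρ t - μ) * (δ ^ 2 - γ t ^ 2)) t) :
    ∀ t ∈ I,
      ρ t ^ 2 * (δ ^ 2 - γ t ^ 2) * Real.exp (-2 * μ * ρ t)
        = ρ 0 ^ 2 * (δ ^ 2 - γ 0 ^ 2) * Real.exp (-2 * μ * ρ 0) := by
  set f : ℝ → ℝ := fun t => ρ t ^ 2 * (δ ^ 2 - γ t ^ 2) * Real.exp (-2 * μ * ρ t)
    with hf
  have hconv : Convex ℝ I := convex_iff_ordConnected.mpr hI
  have hderiv : ∀ t ∈ I, HasDerivAt f 0 t := by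
    intro t ht
    have hρt := hρ t ht
    have hγt := hγ t ht
    have hρne : ρ t ≠ 0 := (hρpos t ht).ne'
    have h1 : HasDerivAt (fun s => ρ s ^ 2) (2 * ρ t ^ 1 * γ t) t := hρt.pow 2
    have h2 : HasDerivAt (fun s => δ ^ 2 - γ s ^ 2)
        (0 - 2 * γ t ^ 1 * ((1 / ρ t - μ) * (δ ^ 2 - γ t ^ 2))) t :=
      (hasDerivAt_const t (δ ^ 2)).sub (hγt.pow 2)
    have h3 : HasDerivAt (fun s => Real.exp (-2 * μ * ρ s))
        (Real.exp (-2 * μ * ρ t) * (-2 * μ * γ t)) t :=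
      (hρt.const_mul (-2 * μ)).exp
    have := (h1.mul h2).mul h3
    convert this using 1
    · rfl
    · rfl
    · rfl
    simp only [Pi.mul_apply]
    field_simp
    ring
  have key : ∀ t ∈ I, f t = f 0 := by
    intro t ht
    have := hconv.norm_image_sub_le_of_norm_hasDerivWithin_le
      (f' := fun _ => (0 : ℝ)) (C := 0)
      (fun x hx => (hderiv x hx).hasDerivWithinAt) (fun x _ => by simp) h0I ht
    have h2 : f t - f 0 = 0 := by simpa using this
    exact sub_eq_zero.mp h2
  exact key
end

section
/- Let μ > 0 and let r, g : I → ℝ² be differentiable on an interval I with r(t) ≠ 0, satisfying ṙ(t) = g(t) and ġ(t) = u(t) g(t)^⊥ with the motion camouflage feedback u(t) = −μ (r(t)·g(t)^⊥)/|r(t)|, where g^⊥ denotes counterclockwise rotation of g by π/2. Then the quantity E(t) = |r(t)|² ( |g(t)|² − ((r(t)·g(t))/|r(t)|)² ) e^{−2μ|r(t)|} is constant along the solution. -/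
open scoped RealInnerProductSpace

lemma inner_two (v w : EuclideanSpace ℝ (Fin 2)) :
    ⟪v, w⟫ = v 0 * w 0 + v 1 * w 1 := by
  simp [PiLp.inner_apply, Fin.sum_univ_two, mul_comm]

lemma inner_perp_self (v : EuclideanSpace ℝ (Fin 2)) : ⟪v, perp v⟫ = 0 := by
  simp [inner_two, perp_apply0, perp_apply1]; ring

lemma lagrange (a b : EuclideanSpace ℝ (Fin 2)) :
    ⟪a, a⟫ * ⟪b, b⟫ - ⟪a, b⟫ ^ 2 = ⟪a, perp b⟫ ^ 2 := by
  simp only [inner_two, perp_apply0, perp_apply1]; ring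

/-- Along any solution of the planar mutual motion camouflage dynamics `r' = g`,
`g' = u • g^⊥` with feedback `u = -μ ⟪r, g^⊥⟫ / ‖r‖`, the quantity
`E = ‖r‖² (‖g‖² - (⟪r, g⟫/‖r‖)²) e^{-2μ‖r‖}` is constant. -/
theorem mmc_conserved_quantity
    (μ : ℝ) (hμ : 0 < μ) (I : Set ℝ) (hI : I.OrdConnected)
    (r g : ℝ → EuclideanSpace ℝ (Fin 2)) (u : ℝ → ℝ)
    (hr0 : ∀ t ∈ I, r t ≠ 0)
    (hu : ∀ t ∈ I, u t = -μ * (⟪r t, perp (g t)⟫ / ‖r t‖))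
    (hr : ∀ t ∈ I, HasDerivAt r (g t) t)
    (hg : ∀ t ∈ I, HasDerivAt g (u t • perp (g t)) t) :
    ∀ s ∈ I, ∀ t ∈ I,
      ‖r s‖ ^ 2 * (‖g s‖ ^ 2 - (⟪r s, g s⟫ / ‖r s‖) ^ 2) * Real.exp (-2 * μ * ‖r s‖)
        = ‖r t‖ ^ 2 * (‖g t‖ ^ 2 - (⟪r t, g t⟫ / ‖r t‖) ^ 2)
            * Real.exp (-2 * μ * ‖r t‖) := by
  -- The conserved quantity, written via inner products.
  set F : ℝ → ℝ := fun τ =>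
    (⟪r τ, r τ⟫ * ⟪g τ, g τ⟫ - ⟪r τ, g τ⟫ ^ 2) *
      Real.exp (-2 * μ * Real.sqrt ⟪r τ, r τ⟫) with hF
  have hnorm : ∀ τ, Real.sqrt ⟪r τ, r τ⟫ = ‖r τ‖ := by
    intro τ
    rw [real_inner_self_eq_norm_sq]
    exact Real.sqrt_sq (norm_nonneg _)
  -- F has derivative 0 on I.
  have key : ∀ t ∈ I, HasDerivAt F 0 t := by
    intro t ht
    have hrne : ‖r t‖ ≠ 0 := norm_ne_zero_iff.mpr (hr0 t ht)
    have hPne : ⟪r t, r t⟫ ≠ 0 := by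
      rw [real_inner_self_eq_norm_sq]; positivity
    have hP : HasDerivAt (fun τ => ⟪r τ, r τ⟫)
        (⟪r t, g t⟫ + ⟪g t, r t⟫) t := (hr t ht).inner ℝ (hr t ht)
    have hQ : HasDerivAt (fun τ => ⟪r τ, g τ⟫)
        (⟪r t, u t • perp (g t)⟫ + ⟪g t, g t⟫) t := (hr t ht).inner ℝ (hg t ht)
    have hD : HasDerivAt (fun τ => ⟪g τ, g τ⟫)
        (⟪g t, u t • perp (g t)⟫ + ⟪u t • perp (g t), g t⟫) t :=
      (hg t ht).inner ℝ (hg t ht)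
    have hS : HasDerivAt (fun τ => Real.sqrt ⟪r τ, r τ⟫)
        ((⟪r t, g t⟫ + ⟪g t, r t⟫) / (2 * Real.sqrt ⟪r t, r t⟫)) t :=
      hP.sqrt hPne
    have hE : HasDerivAt (fun τ => Real.exp (-2 * μ * Real.sqrt ⟪r τ, r τ⟫))
        ((-2 * μ * ((⟪r t, g t⟫ + ⟪g t, r t⟫) / (2 * Real.sqrt ⟪r t, r t⟫))) *
          Real.exp (-2 * μ * Real.sqrt ⟪r t, r t⟫)) t := by
      have := ((hS.const_mul (-2 * μ)).exp)
      simpa [mul_comm] using this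
    have hFd := ((hP.mul hD).sub (hQ.pow 2)).mul hE
    refine hFd.congr_deriv ?_
    symm
    simp only [Pi.mul_apply, Pi.sub_apply, Pi.pow_apply]
    -- Now show the derivative expression is zero.
    rw [hu t ht]
    have hbb : ⟪g t, perp (g t)⟫ = 0 := inner_perp_self (g t)
    have hbb' : ⟪perp (g t), g t⟫ = 0 := by
      rw [real_inner_comm]; exact hbb
    have hlag := lagrange (r t) (g t)
    have hsq : Real.sqrt ⟪r t, r t⟫ = ‖r t‖ := hnorm t
    have hP2 : ⟪r t, r t⟫ = ‖r t‖ ^ 2 := real_inner_self_eq_norm_sq (r t)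
    have hgr : ⟪g t, r t⟫ = ⟪r t, g t⟫ := real_inner_comm _ _
    simp only [inner_smul_right, real_inner_smul_left, hbb, hbb', hsq, hgr, mul_zero, zero_mul,
      add_zero, zero_add]
    set W := ⟪r t, perp (g t)⟫
    set Q := ⟪r t, g t⟫
    set D := ⟪g t, g t⟫
    set ρ := ‖r t‖
    -- goal : 0 = ((P*... ) ...)
    have expne : Real.exp (-2 * μ * ρ) ≠ 0 := Real.exp_ne_zero _
    rw [hP2] at hlag ⊢
    field_simp
    linear_combination (2 * μ * Q * Real.exp (-(μ * ρ * 2))) * hlag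
  -- Constancy of F on I.
  have hconst : ∀ s ∈ I, ∀ t ∈ I, F s = F t := by
    intro s hs t ht
    have hconv : Convex ℝ I := hI.convex
    have bound :
        ‖F s - F t‖ ≤ 0 * ‖s - t‖ := by
      apply hconv.norm_image_sub_le_of_norm_hasFDerivWithin_le
        (f' := fun _ => (0 : ℝ →L[ℝ] ℝ)) ?_ (fun x hx => by simp) ht hs
      intro x hx
      have := (key x hx).hasFDerivAt.hasFDerivWithinAt (s := I)
      refine this.congr_fderiv ?_
      ext y
      simp
    have : ‖F s - F t‖ ≤ 0 := by simpa using bound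
    have := le_antisymm this (norm_nonneg _)
    rwa [norm_sub_eq_zero_iff] at this
  intro s hs t ht
  have h1 : ∀ τ ∈ I,
      ‖r τ‖ ^ 2 * (‖g τ‖ ^ 2 - (⟪r τ, g τ⟫ / ‖r τ‖) ^ 2) * Real.exp (-2 * μ * ‖r τ‖) = F τ := by
    intro τ hτ
    have hrne : ‖r τ‖ ≠ 0 := norm_ne_zero_iff.mpr (hr0 τ hτ)
    rw [hF]
    simp only [real_inner_self_eq_norm_sq, hnorm, Real.sqrt_sq (norm_nonneg _)]
    field_simp
  rw [h1 s hs, h1 t ht]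
  exact hconst s hs t ht
end

section
/- Let ν₁, ν₂ : ℝ → ℝ be continuous with ν₁(t) − ν₂(t) ≠ 0, and let (ρ, ψ) : [0, T) → ℝ² be a differentiable solution of ρ̇(t) = (ν₁(t) − ν₂(t)) cos ψ(t), ψ̇(t) = −(1/ρ(t))(ν₁(t) − ν₂(t)) sin ψ(t) with ρ continuous and positive. If ρ(0) > 0 and 0 < ψ(0) < π, then ρ(t) > 0 and 0 < ψ(t) < π for all t ∈ [0, T); i.e., the region {ρ > 0, 0 < ψ < π} is positively invariant under the restricted dynamics. -/
/-- Positive invariance of the region `{ρ > 0, 0 < ψ < π}` under the restricted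
dynamics `ρ' = (ν₁ - ν₂) cos ψ`, `ψ' = -(1/ρ)(ν₁ - ν₂) sin ψ` on `[0, T)`:
if `ρ 0 > 0` and `0 < ψ 0 < π`, then `ρ t > 0` and `0 < ψ t < π` for all
`t ∈ [0, T)`. -/
theorem tva_region_positively_invariant
    (ν₁ ν₂ : ℝ → ℝ) (hν₁c : Continuous ν₁) (hν₂c : Continuous ν₂)
    (hνne : ∀ t, ν₁ t - ν₂ t ≠ 0)
    (T : ℝ) (ρ ψ : ℝ → ℝ)
    (hρc : ContinuousOn ρ (Set.Ico 0 T))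
    (hρpos : ∀ t ∈ Set.Ico (0 : ℝ) T, 0 < ρ t)
    (hρ : ∀ t ∈ Set.Ico (0 : ℝ) T, HasDerivAt ρ ((ν₁ t - ν₂ t) * Real.cos (ψ t)) t)
    (hψ : ∀ t ∈ Set.Ico (0 : ℝ) T,
      HasDerivAt ψ (-(1 / ρ t) * (ν₁ t - ν₂ t) * Real.sin (ψ t)) t)
    (hT : 0 < T)
    (hρ0 : 0 < ρ 0) (hψ0 : ψ 0 ∈ Set.Ioo 0 Real.pi) :
    ∀ t ∈ Set.Ico (0 : ℝ) T, 0 < ρ t ∧ ψ t ∈ Set.Ioo 0 Real.pi := by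
  -- conservation of ρ sin ψ
  have key : ∀ s ∈ Set.Ico (0:ℝ) T, ρ s * Real.sin (ψ s) = ρ 0 * Real.sin (ψ 0) := by
    intro s hs
    have hsub : Set.Icc (0:ℝ) s ⊆ Set.Ico 0 T := fun x hx =>
      ⟨hx.1, lt_of_le_of_lt hx.2 hs.2⟩
    have hderiv : ∀ x ∈ Set.Ico (0:ℝ) s,
        HasDerivWithinAt (fun u => ρ u * Real.sin (ψ u)) 0 (Set.Ici x) x := by
      intro x hx
      have hx' : x ∈ Set.Ico (0:ℝ) T := hsub ⟨hx.1, hx.2.le⟩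
      have h1 := (hρ x hx').mul ((hψ x hx').sin)
      have h2 : HasDerivAt (fun u => ρ u * Real.sin (ψ u)) 0 x := by
        refine h1.congr_deriv ?_
        have hinv : ρ x * (ρ x)⁻¹ = 1 := mul_inv_cancel₀ (ne_of_gt (hρpos x hx'))
        linear_combination (-((ν₁ x - ν₂ x) * Real.cos (ψ x) * Real.sin (ψ x))) * hinv
      exact h2.hasDerivWithinAt
    have hcont : ContinuousOn (fun u => ρ u * Real.sin (ψ u)) (Set.Icc 0 s) := by
      intro x hx
      exact ((hρ x (hsub hx)).continuousAt.mul
        (Real.continuous_sin.continuousAt.comp (hψ x (hsub hx)).continuousAt)).continuousWithinAt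
    exact constant_of_has_deriv_right_zero hcont hderiv s (Set.right_mem_Icc.mpr hs.1)
  have hsinpos : ∀ s ∈ Set.Ico (0:ℝ) T, 0 < Real.sin (ψ s) := by
    intro s hs
    have h0 : 0 < ρ 0 * Real.sin (ψ 0) :=
      mul_pos hρ0 (Real.sin_pos_of_pos_of_lt_pi hψ0.1 hψ0.2)
    have := key s hs
    have hρs := hρpos s hs
    nlinarith
  intro t ht
  refine ⟨hρpos t ht, ?_, ?_⟩
  · -- 0 < ψ t
    by_contra hle
    push_neg at hle
    have hsub : Set.Icc (0:ℝ) t ⊆ Set.Ico 0 T := fun x hx =>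
      ⟨hx.1, lt_of_le_of_lt hx.2 ht.2⟩
    have hcψ : ContinuousOn ψ (Set.Icc 0 t) := fun x hx =>
      (hψ x (hsub hx)).continuousAt.continuousWithinAt
    have : (0:ℝ) ∈ Set.Icc (ψ t) (ψ 0) := ⟨hle, hψ0.1.le⟩
    obtain ⟨s, hsmem, hs0⟩ := intermediate_value_Icc' ht.1 hcψ this
    have := hsinpos s (hsub hsmem)
    rw [hs0] at this
    simp at this
  · -- ψ t < π
    by_contra hge
    push_neg at hge
    have hsub : Set.Icc (0:ℝ) t ⊆ Set.Ico 0 T := fun x hx =>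
      ⟨hx.1, lt_of_le_of_lt hx.2 ht.2⟩
    have hcψ : ContinuousOn ψ (Set.Icc 0 t) := fun x hx =>
      (hψ x (hsub hx)).continuousAt.continuousWithinAt
    have : Real.pi ∈ Set.Icc (ψ 0) (ψ t) := ⟨hψ0.2.le, hge⟩
    obtain ⟨s, hsmem, hs0⟩ := intermediate_value_Icc ht.1 hcψ this
    have := hsinpos s (hsub hsmem)
    rw [hs0] at this
    simp at this
end
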